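/- Let C > 0, a > 0, and let (x_n)_{n≥1} be a sequence of positive reals with x₁ = a and x_{n+1} ≤ x_n + C·x_n² for all n. If N is a positive integer with N·C·a·e ≤ 1/2 (where e is Euler's number), then x_n ≤ e·a for all 1 ≤ n ≤ N. -/
import Mathlib


/-- Stability of quadratically perturbed recursions: if `x₁ = a`,
`x_{n+1} ≤ x_n + C x_n²`, and `N C a e ≤ 1/2`, then `x_n ≤ e a` for `1 ≤ n ≤ N`. -/
theorem quadratic_recursion_stability (C a : ℝ) (hC : 0 < C) (ha : 0 < a)
    (x : ℕ → ℝ) (hpos : ∀ n, 1 ≤ n → 0 < x n) (hx1 : x 1 = a)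
    (hrec : ∀ n, 1 ≤ n → x (n + 1) ≤ x n + C * (x n) ^ 2)
    (N : ℕ) (hN : 1 ≤ N) (hNCa : (N : ℝ) * C * a * Real.exp 1 ≤ 1 / 2) :
    ∀ n, 1 ≤ n → n ≤ N → x n ≤ Real.exp 1 * a := by
  set b : ℝ := C * a * Real.exp 1 with hb
  have hbpos : 0 < b := by positivity
  -- bound on the geometric factor
  have hgeo : ∀ n : ℕ, n ≤ N → a * (1 + b) ^ (n - 1) ≤ Real.exp 1 * a := by
    intro n hn
    have h1 : (1 + b) ^ (n - 1) ≤ Real.exp ((n - 1 : ℕ) * b) := by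
      rw [Real.exp_nat_mul]
      rw [add_comm]
      exact pow_le_pow_left₀ (by positivity) (by linarith [Real.add_one_le_exp b]) _
    have h2 : ((n - 1 : ℕ) : ℝ) * b ≤ 1 := by
      have hnN : ((n - 1 : ℕ) : ℝ) ≤ (N : ℝ) := by
        exact_mod_cast le_trans (Nat.sub_le n 1) hn
      have : ((n - 1 : ℕ) : ℝ) * b ≤ (N : ℝ) * b := by
        exact mul_le_mul_of_nonneg_right hnN hbpos.le
      calc ((n - 1 : ℕ) : ℝ) * b ≤ (N : ℝ) * b := this
        _ = (N : ℝ) * C * a * Real.exp 1 := by ring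
        _ ≤ 1 / 2 := hNCa
        _ ≤ 1 := by norm_num
    have h3 : Real.exp (((n - 1 : ℕ) : ℝ) * b) ≤ Real.exp 1 := Real.exp_le_exp.mpr h2
    calc a * (1 + b) ^ (n - 1) ≤ a * Real.exp (((n - 1 : ℕ) : ℝ) * b) := by
          exact mul_le_mul_of_nonneg_left (h1.trans_eq rfl) ha.le
      _ ≤ a * Real.exp 1 := mul_le_mul_of_nonneg_left h3 ha.le
      _ = Real.exp 1 * a := mul_comm _ _
  -- main induction
  have key : ∀ n, 1 ≤ n → n ≤ N → x n ≤ a * (1 + b) ^ (n - 1) := by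
    intro n
    induction n with
    | zero => intro h; omega
    | succ m ih =>
      intro _ hmN
      rcases Nat.eq_or_lt_of_le (Nat.one_le_iff_ne_zero.mpr (Nat.succ_ne_zero m)) with h1 | h1
      · obtain rfl : m = 0 := by omega
        rw [hx1]; simp
      · have hm1 : 1 ≤ m := Nat.lt_succ_iff.mp h1
        have hmN' : m ≤ N := le_trans (Nat.le_succ m) hmN
        have hxm : x m ≤ a * (1 + b) ^ (m - 1) := ih hm1 hmN'
        have hxm' : x m ≤ Real.exp 1 * a := hxm.trans (hgeo m hmN')
        have hxmp : 0 < x m := hpos m hm1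
        have : x (m + 1) ≤ x m * (1 + b) := by
          calc x (m + 1) ≤ x m + C * (x m) ^ 2 := hrec m hm1
            _ = x m * (1 + C * x m) := by ring
            _ ≤ x m * (1 + b) := by
                apply mul_le_mul_of_nonneg_left _ hxmp.le
                have : C * x m ≤ C * (Real.exp 1 * a) :=
                  mul_le_mul_of_nonneg_left hxm' hC.le
                nlinarith
        calc x (m + 1) ≤ x m * (1 + b) := this
          _ ≤ (a * (1 + b) ^ (m - 1)) * (1 + b) := by
              apply mul_le_mul_of_nonneg_right hxm (by positivity)
          _ = a * (1 + b) ^ (m - 1 + 1) := by ring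
          _ = a * (1 + b) ^ (m + 1 - 1) := by
              congr 2
              omega
  intro n h1 h2
  exact (key n h1 h2).trans (hgeo n h2)
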